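/- For any preferred (equivalently stable) extension S of D_dag, the map sending S to the digraph G(S) = (V, {(x,y) : arr_{xy} ∈ S}) is a bijection between stable extensions of D_dag and directed acyclic graphs on V. -/

import Mathlib

/-- Assumptions of the causal ABA framework `D_dag`: an arrow assumption
`arr x y` for each ordered pair of distinct variables and a no-edge assumption
`noe` for each unordered pair. -/
inductive DagAsm (V : Type) : Type
  | arr : V → V → DagAsm V
  | noe : Sym2 V → DagAsm V

namespace DagAsm

/-- The assumption set of `D_dag`. -/
def Asms (V : Type) : Set (DagAsm V) :=
  {a | ∃ x y : V, x ≠ y ∧ (a = arr x y ∨ a = noe s(x, y))}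

/-- The attack relation induced by the rules of `D_dag`: mutual exclusion among
`{arr x y, arr y x, noe {x,y}}` for each pair `x ≠ y`, and, for each directed
cycle, the arrows along the cycle attack each arrow in it. -/
inductive Att (V : Type) : Set (DagAsm V) → DagAsm V → Prop
  | arrArr (x y : V) : x ≠ y → Att V {arr y x} (arr x y)
  | noeArr (x y : V) : x ≠ y → Att V {noe s(x, y)} (arr x y)
  | arrNoe (x y : V) : x ≠ y → Att V {arr x y} (noe s(x, y))
  | cycle (l : List V) (x y : V) : 2 ≤ l.length → l.head? = l.getLast? →
      (x, y) ∈ l.zip l.tail →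
      Att V {a | ∃ p ∈ l.zip l.tail, a = arr p.1 p.2} (arr x y)

/-- `S` attacks `T` if some subset of `S` attacks a member of `T`. -/
def Attacks {V : Type} (S T : Set (DagAsm V)) : Prop :=
  ∃ U ⊆ S, ∃ a ∈ T, Att V U a

def ConflictFree {V : Type} (S : Set (DagAsm V)) : Prop :=
  S ⊆ Asms V ∧ ¬ Attacks S S

def Defends {V : Type} (S T : Set (DagAsm V)) : Prop :=
  ∀ U ⊆ Asms V, Attacks U T → Attacks S U

def Admissible {V : Type} (S : Set (DagAsm V)) : Prop :=
  ConflictFree S ∧ Defends S S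

def Complete {V : Type} (S : Set (DagAsm V)) : Prop :=
  Admissible S ∧ ∀ T ⊆ Asms V, Defends S T → T ⊆ S

/-- Preferred: ⊆-maximal admissible. -/
def Preferred {V : Type} (S : Set (DagAsm V)) : Prop :=
  Admissible S ∧ ∀ T : Set (DagAsm V), Admissible T → S ⊆ T → T = S

/-- Stable: conflict-free and attacks every assumption outside itself. -/
def Stable {V : Type} (S : Set (DagAsm V)) : Prop :=
  ConflictFree S ∧ ∀ a ∈ Asms V, a ∉ S → Attacks S {a}

/-- The digraph `G(S)` induced by the arrow assumptions in `S`. -/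
def graphOf {V : Type} (S : Set (DagAsm V)) : V → V → Prop :=
  fun x y => arr x y ∈ S

end DagAsm

section Helpers

variable {V : Type} {E : V → V → Prop}

private lemma chain'_iff_zip : ∀ (l : List V), l.Chain' E ↔ ∀ p ∈ l.zip l.tail, E p.1 p.2 := by
  intro l
  induction l with
  | nil => simp [List.Chain']
  | cons a m ih =>
    cases m with
    | nil => simp [List.Chain']
    | cons b m' =>
      unfold List.Chain' at ih ⊢
      rw [List.isChain_cons_cons, ih]
      simp only [List.tail_cons, List.zip_cons_cons, List.mem_cons]
      constructor
      · rintro ⟨hab, h⟩ p (rfl | hp)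
        · exact hab
        · exact h p hp
      · intro h
        exact ⟨h (a, b) (Or.inl rfl), fun p hp => h p (Or.inr hp)⟩

private lemma transGen_of_chain' : ∀ (l : List V), l.Chain' E → ∀ a b, l.head? = some a →
    l.getLast? = some b → 2 ≤ l.length → Relation.TransGen E a b := by
  intro l
  induction l with
  | nil => simp
  | cons c m ih =>
    intro hc a b ha hb hlen
    simp only [List.head?_cons, Option.some.injEq] at ha
    subst ha
    cases m with
    | nil => simp at hlen
    | cons d m' =>
      have hcd : E c d := (List.isChain_cons_cons.mp hc).1
      have hrest : (d :: m').Chain' E := (List.isChain_cons_cons.mp hc).2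
      rw [List.getLast?_cons_cons] at hb
      cases m' with
      | nil =>
        simp at hb; subst hb
        exact Relation.TransGen.single hcd
      | cons e m'' =>
        exact Relation.TransGen.head hcd (ih hrest d b rfl hb (by simp))

private lemma exists_list_of_transGen {a b : V} (h : Relation.TransGen E a b) :
    ∃ l : List V, l.Chain' E ∧ l.head? = some a ∧ l.getLast? = some b ∧ 2 ≤ l.length := by
  induction h with
  | single hab => exact ⟨[a, _], by simpa [List.Chain', List.isChain_cons_cons] using hab, by simp, by simp, by simp⟩
  | tail _ hbc ih =>
    obtain ⟨l, hch, hh, hl, hlen⟩ := ih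
    refine ⟨l ++ [_], ?_, ?_, (List.getLast?_concat (l := l)), by simp; omega⟩
    · unfold List.Chain'
      rw [List.isChain_append]
      refine ⟨hch, List.isChain_singleton _, ?_⟩
      intro x hx y hy
      simp only [List.head?_cons, Option.mem_def, Option.some.injEq] at hy
      rw [hl] at hx
      simp only [Option.mem_def, Option.some.injEq] at hx
      subst hx; subst hy; exact hbc
    · rw [List.head?_append, hh]; rfl

open DagAsm

private lemma att_noe_inv {U : Set (DagAsm V)} {z : Sym2 V} (h : Att V U (noe z)) :
    ∃ x y : V, x ≠ y ∧ z = s(x, y) ∧ U = {arr x y} := by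
  cases h with
  | arrNoe x y hxy => exact ⟨x, y, hxy, rfl, rfl⟩

private lemma arr_mem_extOf {S : Set (DagAsm V)}
    {x y : V} (hsub : S ⊆ Asms V) (h : arr x y ∈ S) : x ≠ y := by
  obtain ⟨x', y', hne, h' | h'⟩ := hsub h
  · obtain ⟨rfl, rfl⟩ : x = x' ∧ y = y' := by
      refine DagAsm.arr.inj h'
    exact hne
  · exact absurd h' (by simp)

private lemma stable_noe_iff {S : Set (DagAsm V)} (hS : Stable S) {x y : V} (hxy : x ≠ y) :
    noe s(x, y) ∈ S ↔ arr x y ∉ S ∧ arr y x ∉ S := by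
  constructor
  · intro hn
    constructor
    · intro ha
      exact hS.1.2 ⟨{arr x y}, by simpa using ha, noe s(x, y), hn, Att.arrNoe x y hxy⟩
    · intro ha
      refine hS.1.2 ⟨{arr y x}, by simpa using ha, noe s(x, y), hn, ?_⟩
      have h2 : (noe s(y, x) : DagAsm V) = noe s(x, y) := by rw [Sym2.eq_swap]
      exact h2 ▸ Att.arrNoe y x hxy.symm
  · rintro ⟨h1, h2⟩
    by_contra hn
    obtain ⟨U, hU, a, ha, hatt⟩ := hS.2 (noe s(x, y)) ⟨x, y, hxy, Or.inr rfl⟩ hn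
    simp only [Set.mem_singleton_iff] at ha
    subst ha
    obtain ⟨x', y', hne', hz, rfl⟩ := att_noe_inv hatt
    have hm : arr x' y' ∈ S := hU rfl
    rcases Sym2.eq_iff.mp hz with ⟨rfl, rfl⟩ | ⟨rfl, rfl⟩
    · exact h1 hm
    · exact h2 hm

private lemma graphOf_acyclic {S : Set (DagAsm V)} (hS : Stable S) :
    ∀ x : V, ¬ Relation.TransGen (graphOf S) x x := by
  intro x hx
  obtain ⟨l, hch, hh, hl, hlen⟩ := exists_list_of_transGen hx
  have hzip := (chain'_iff_zip l).mp hch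
  obtain ⟨c, m, rfl⟩ : ∃ c m, l = c :: m := by
    cases l with
    | nil => simp at hh
    | cons c m => exact ⟨c, m, rfl⟩
  simp only [List.head?_cons, Option.some.injEq] at hh
  subst hh
  obtain ⟨d, m', rfl⟩ : ∃ d m', m = d :: m' := by
    cases m with
    | nil => simp at hlen
    | cons d m' => exact ⟨d, m', rfl⟩
  have hmem : (c, d) ∈ (c :: d :: m').zip (c :: d :: m').tail := by
    simp [List.zip_cons_cons]
  refine hS.1.2 ⟨{a | ∃ p ∈ (c :: d :: m').zip (c :: d :: m').tail, a = arr p.1 p.2}, ?_,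
    arr c d, hzip (c, d) hmem, Att.cycle _ c d hlen (by rw [hl]; rfl) hmem⟩
  rintro a ⟨p, hp, rfl⟩
  exact hzip p hp

/-- The stable extension corresponding to a digraph `E`. -/
private def extOf (E : V → V → Prop) : Set (DagAsm V) :=
  {a | ∃ x y : V, x ≠ y ∧ ((a = arr x y ∧ E x y) ∨ (a = noe s(x, y) ∧ ¬E x y ∧ ¬E y x))}

private lemma mem_extOf_arr {x y : V} : arr x y ∈ extOf E ↔ x ≠ y ∧ E x y := by
  constructor
  · rintro ⟨x', y', hne, ⟨heq, h⟩ | ⟨heq, _⟩⟩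
    · obtain ⟨rfl, rfl⟩ := DagAsm.arr.inj heq
      exact ⟨hne, h⟩
    · exact absurd heq (by simp)
  · rintro ⟨hne, h⟩
    exact ⟨x, y, hne, Or.inl ⟨rfl, h⟩⟩

private lemma mem_extOf_noe {x y : V} (hxy : x ≠ y) :
    noe s(x, y) ∈ extOf E ↔ ¬E x y ∧ ¬E y x := by
  constructor
  · rintro ⟨x', y', hne, ⟨heq, _⟩ | ⟨heq, h1, h2⟩⟩
    · exact absurd heq (by simp)
    · have hz : s(x, y) = s(x', y') := by
        have := DagAsm.noe.inj heq
        exact this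
      rcases Sym2.eq_iff.mp hz with ⟨rfl, rfl⟩ | ⟨rfl, rfl⟩
      · exact ⟨h1, h2⟩
      · exact ⟨h2, h1⟩
  · rintro ⟨h1, h2⟩
    exact ⟨x, y, hxy, Or.inr ⟨rfl, h1, h2⟩⟩

private lemma extOf_stable (hE : ∀ x : V, ¬ Relation.TransGen E x x) : Stable (extOf E) := by
  have hsub : extOf E ⊆ Asms V := by
    rintro a ⟨x, y, hxy, ⟨rfl, _⟩ | ⟨rfl, _⟩⟩
    · exact ⟨x, y, hxy, Or.inl rfl⟩
    · exact ⟨x, y, hxy, Or.inr rfl⟩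
  refine ⟨⟨hsub, ?_⟩, ?_⟩
  · rintro ⟨U, hU, a, ha, hatt⟩
    cases hatt with
    | arrArr x y hxy =>
      have h1 : E y x := (mem_extOf_arr.mp (hU rfl)).2
      have h2 : E x y := (mem_extOf_arr.mp ha).2
      exact hE x (Relation.TransGen.head h2 (Relation.TransGen.single h1))
    | noeArr x y hxy =>
      exact ((mem_extOf_noe hxy).mp (hU rfl)).1 (mem_extOf_arr.mp ha).2
    | arrNoe x y hxy =>
      exact ((mem_extOf_noe hxy).mp ha).1 (mem_extOf_arr.mp (hU rfl)).2
    | cycle l x y hlen hcyc hmem =>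
      have hzip : ∀ p ∈ l.zip l.tail, E p.1 p.2 := fun p hp =>
        (mem_extOf_arr.mp (hU ⟨p, hp, rfl⟩)).2
      have hch := (chain'_iff_zip l).mpr hzip
      obtain ⟨c, m, rfl⟩ : ∃ c m, l = c :: m := by
        cases l with
        | nil => simp at hlen
        | cons c m => exact ⟨c, m, rfl⟩
      exact hE c (transGen_of_chain' _ hch c c rfl (by rw [← hcyc]; rfl) hlen)
  · intro a haAsms hna
    obtain ⟨x, y, hxy, rfl | rfl⟩ := haAsms
    · have hnxy : ¬E x y := fun h => hna (mem_extOf_arr.mpr ⟨hxy, h⟩)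
      by_cases hyx : E y x
      · exact ⟨{arr y x}, by
          simp only [Set.singleton_subset_iff]
          exact mem_extOf_arr.mpr ⟨hxy.symm, hyx⟩, arr x y, rfl, Att.arrArr x y hxy⟩
      · exact ⟨{noe s(x, y)}, by
          simp only [Set.singleton_subset_iff]
          exact (mem_extOf_noe hxy).mpr ⟨hnxy, hyx⟩, arr x y, rfl, Att.noeArr x y hxy⟩
    · have hor : E x y ∨ E y x := by
        by_contra hc
        push_neg at hc
        exact hna ((mem_extOf_noe hxy).mpr hc)
      rcases hor with h | h
      · exact ⟨{arr x y}, by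
          simp only [Set.singleton_subset_iff]
          exact mem_extOf_arr.mpr ⟨hxy, h⟩, noe s(x, y), rfl, Att.arrNoe x y hxy⟩
      · refine ⟨{arr y x}, by
          simp only [Set.singleton_subset_iff]
          exact mem_extOf_arr.mpr ⟨hxy.symm, h⟩, noe s(x, y), rfl, ?_⟩
        have h2 : (noe s(y, x) : DagAsm V) = noe s(x, y) := by rw [Sym2.eq_swap]
        exact h2 ▸ Att.arrNoe y x hxy.symm

private lemma stable_subset_of_graph_eq {S1 S2 : Set (DagAsm V)} (h1 : Stable S1)
    (h2 : Stable S2) (heq : graphOf S1 = graphOf S2) : S1 ⊆ S2 := by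
  intro a ha
  obtain ⟨x, y, hxy, rfl | rfl⟩ := h1.1.1 ha
  · have h : graphOf S1 x y := ha
    rw [heq] at h
    exact h
  · have hm := (stable_noe_iff h1 hxy).mp ha
    refine (stable_noe_iff h2 hxy).mpr ⟨?_, ?_⟩
    · intro hc
      exact hm.1 (by have h : graphOf S2 x y := hc; rw [← heq] at h; exact h)
    · intro hc
      exact hm.2 (by have h : graphOf S2 y x := hc; rw [← heq] at h; exact h)

end Helpers


/-- the map `S ↦ G(S)` sending a stable (= preferred) extension of
`D_dag` to the digraph of its arrow assumptions is a bijection between the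
stable extensions of `D_dag` and the directed acyclic graphs on `V`. -/
theorem stable_extensions_biject_dags {V : Type} :
    Set.BijOn (DagAsm.graphOf (V := V))
      {S : Set (DagAsm V) | DagAsm.Stable S}
      {E : V → V → Prop | ∀ x : V, ¬ Relation.TransGen E x x} := by
  refine ⟨?_, ?_, ?_⟩
  · intro S hS
    exact graphOf_acyclic hS
  · intro S1 hS1 S2 hS2 heq
    exact le_antisymm (stable_subset_of_graph_eq hS1 hS2 heq)
      (stable_subset_of_graph_eq hS2 hS1 heq.symm)
  · intro E hE
    refine ⟨extOf E, extOf_stable hE, ?_⟩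
    funext x y
    apply propext
    constructor
    · intro h
      exact (mem_extOf_arr.mp h).2
    · intro h
      have hxy : x ≠ y := by
        rintro rfl
        exact hE x (Relation.TransGen.single h)
      exact mem_extOf_arr.mpr ⟨hxy, h⟩
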